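/- arXiv:1512.03786 — 7 statements merged into one kernel-verified Lean document; each statement's English description precedes it below -/
import Mathlib

section
/- Let (a₁,b₁) and (a₂,b₂) be pairs in ℂ × (ℂ \ {0}) such that (a₂,b₂) ≠ (a₁,b₁) and (a₂,b₂) ≠ (−a₁,−b₁). Then the matrices A₂(a₁,b₁) and A₂(a₂,b₂) do not commute: A₂(a₁,b₁)·A₂(a₂,b₂) ≠ A₂(a₂,b₂)·A₂(a₁,b₁). -/
/-- The matrix `A₂(a,b) = [[a, b], [(1−a²)/b, −a]]`. -/
noncomputable def A2 (a b : ℂ) : Matrix (Fin 2) (Fin 2) ℂ :=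
  !![a, b; (1 - a ^ 2) / b, -a]

theorem A2_not_commute (a₁ b₁ a₂ b₂ : ℂ) (hb₁ : b₁ ≠ 0) (hb₂ : b₂ ≠ 0)
    (h₁ : (a₂, b₂) ≠ (a₁, b₁)) (h₂ : (a₂, b₂) ≠ (-a₁, -b₁)) :
    A2 a₁ b₁ * A2 a₂ b₂ ≠ A2 a₂ b₂ * A2 a₁ b₁ := by
  intro h
  have h01 := congrFun (congrFun h 0) 1
  have h00 := congrFun (congrFun h 0) 0
  simp [A2, Matrix.mul_apply, Fin.sum_univ_two] at h01 h00
  -- h01 : a₁ * b₂ + b₁ * -a₂ = a₂ * b₁ + b₂ * -a₁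
  -- h00 : a₁ * a₂ + b₁ * ((1 - a₂^2)/b₂) = a₂ * a₁ + b₂ * ((1 - a₁^2)/b₁)
  have hab : a₁ * b₂ = a₂ * b₁ := by linear_combination h01 / 2
  have hbb : b₁ ^ 2 * (1 - a₂ ^ 2) = b₂ ^ 2 * (1 - a₁ ^ 2) := by
    field_simp at h00
    linear_combination h00
  have hsq : b₁ ^ 2 = b₂ ^ 2 := by
    linear_combination hbb - (a₁ * b₂ + a₂ * b₁) * hab
  rcases sq_eq_sq_iff_eq_or_eq_neg.mp hsq.symm with h' | h'
  · subst h'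
    have : a₂ = a₁ := mul_right_cancel₀ hb₁ (by linear_combination -hab)
    exact h₁ (by simp [this])
  · subst h'
    have : a₂ = -a₁ := mul_right_cancel₀ hb₁ (by linear_combination -hab)
    exact h₂ (by simp [this])
end

section
/- Let m ≥ 1 be a natural number, let a, b ∈ ℂ with a ≠ 1 and b ≠ 0, and let c : Fin m → ℂ. Let Q be the m×2 complex matrix whose i-th row is (c(i), −b·c(i)/(1−a)), and let A be the (m+2)×(m+2) block matrix A = [[I_m, Q], [O, A₂(a,b)]], where I_m is the m×m identity matrix and O is the 2×m zero matrix. Then A² = I_{m+2}, the identity matrix of size m+2. -/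
theorem fromBlocks_A2_sq_eq_one (m : ℕ) (hm : 1 ≤ m) (a b : ℂ) (ha : a ≠ 1) (hb : b ≠ 0)
    (c : Fin m → ℂ) :
    (Matrix.fromBlocks (1 : Matrix (Fin m) (Fin m) ℂ)
        (Matrix.of fun i => ![c i, -b * c i / (1 - a)])
        (0 : Matrix (Fin 2) (Fin m) ℂ) (A2 a b)) ^ 2 = 1 := by
  have ha' : (1 : ℂ) - a ≠ 0 := sub_ne_zero.mpr (Ne.symm ha)
  have hA2 : A2 a b * A2 a b = 1 := by
    ext i j
    fin_cases i <;> fin_cases j <;>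
      simp [A2, Matrix.mul_apply, Fin.sum_univ_two, Matrix.one_apply]
    all_goals first | ring1 | (field_simp [hb, ha']; try ring)
  have hQ : (Matrix.of fun i => ![c i, -b * c i / (1 - a)]) +
      (Matrix.of fun i => ![c i, -b * c i / (1 - a)]) * A2 a b = 0 := by
    ext i j
    fin_cases j <;>
      simp [A2, Matrix.mul_apply, Fin.sum_univ_two]
    all_goals first | ring1 | (field_simp [hb, ha']; try ring)
  rw [pow_two, Matrix.fromBlocks_multiply]
  rw [show ∀ X Y : Matrix (Fin m) (Fin 2) ℂ, ∀ Z : Matrix (Fin 2) (Fin 2) ℂ, (1:Matrix (Fin m) (Fin m) ℂ) * X + Y * Z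
      = X + Y * Z from fun X Y Z => by rw [Matrix.one_mul]]
  simp only [Matrix.mul_one, Matrix.mul_zero, Matrix.zero_mul, add_zero, zero_add, hA2, hQ,
    Matrix.one_mul]
  exact Matrix.fromBlocks_one
end

section
/- Let N ≥ 1 and m ≥ 1 be natural numbers. For each j ∈ {1,…,N} let tⱼ ∈ ℂ with tⱼ ≠ 1, sⱼ ∈ ℂ with sⱼ ≠ 0, and cⱼ : Fin m → ℂ, and let Xⱼ be the (m+2)×(m+2) block matrix [[I_m, Qⱼ], [O, A₂(tⱼ,sⱼ)]], where Qⱼ is the m×2 matrix whose i-th row is (cⱼ(i), −sⱼ·cⱼ(i)/(1−tⱼ)). Then each Xⱼ is invertible, and there exists a group homomorphism φ : Γ_N² → GL_{m+2}(ℂ) such that φ(xⱼ) = Xⱼ for every j = 1,…,N. -/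
/-- The relations of the presented group `Γ_N²`: the squares of the generators. -/
def GammaRels (N : ℕ) : Set (FreeGroup (Fin N)) :=
  { r | ∃ j : Fin N, r = FreeGroup.of j ^ 2 }

/-- The presented group `Γ_N² = ⟨x₁,…,x_N ∣ x₁² = ⋯ = x_N² = e⟩`. -/
abbrev Gamma (N : ℕ) : Type := PresentedGroup (GammaRels N)

theorem exists_hom_Gamma_to_GL (N m : ℕ) (hN : 1 ≤ N) (hm : 1 ≤ m)
    (t s : Fin N → ℂ) (ht : ∀ j, t j ≠ 1) (hs : ∀ j, s j ≠ 0)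
    (c : Fin N → Fin m → ℂ)
    (X : Fin N → Matrix (Fin m ⊕ Fin 2) (Fin m ⊕ Fin 2) ℂ)
    (hX : ∀ j, X j = Matrix.fromBlocks (1 : Matrix (Fin m) (Fin m) ℂ)
        (Matrix.of fun i => ![c j i, -(s j) * c j i / (1 - t j)])
        (0 : Matrix (Fin 2) (Fin m) ℂ) (A2 (t j) (s j))) :
    (∀ j, IsUnit (X j)) ∧
      ∃ φ : Gamma N →* (Matrix (Fin m ⊕ Fin 2) (Fin m ⊕ Fin 2) ℂ)ˣ,
        ∀ j : Fin N,
          (φ (PresentedGroup.of (rels := GammaRels N) j) :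
            Matrix (Fin m ⊕ Fin 2) (Fin m ⊕ Fin 2) ℂ) = X j := by
  have hsq : ∀ j, X j * X j = 1 := by
    intro j
    have h1t : (1 : ℂ) - t j ≠ 0 := sub_ne_zero.mpr (ht j).symm
    have hA : A2 (t j) (s j) * A2 (t j) (s j) = 1 := by
      ext i k
      fin_cases i <;> fin_cases k <;>
        simp [A2, Matrix.mul_apply, Fin.sum_univ_two, Matrix.one_apply] <;>
        (try field_simp [hs j]) <;> (try ring)
    have hQ : (Matrix.of fun i => ![c j i, -s j * c j i / (1 - t j)]) +
        (Matrix.of fun i => ![c j i, -s j * c j i / (1 - t j)]) * A2 (t j) (s j) = 0 := by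
      ext i k
      fin_cases k <;>
        simp [A2, Matrix.mul_apply, Fin.sum_univ_two] <;>
        (try field_simp [hs j, h1t]) <;> (try ring)
    rw [hX j, Matrix.fromBlocks_multiply]
    simp only [Matrix.one_mul, Matrix.mul_zero, Matrix.zero_mul, Matrix.mul_one,
      add_zero, zero_add]
    rw [hA, hQ, Matrix.fromBlocks_one]
  have hunit : ∀ j, IsUnit (X j) := fun j =>
    ⟨⟨X j, X j, hsq j, hsq j⟩, rfl⟩
  refine ⟨hunit, ?_⟩
  set u : Fin N → (Matrix (Fin m ⊕ Fin 2) (Fin m ⊕ Fin 2) ℂ)ˣ :=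
    fun j => ⟨X j, X j, hsq j, hsq j⟩ with hu
  have hrel : ∀ r ∈ GammaRels N, (FreeGroup.lift u) r = 1 := by
    rintro r ⟨j, rfl⟩
    rw [map_pow, FreeGroup.lift_apply_of]
    exact Units.ext (by simpa [sq] using hsq j)
  refine ⟨PresentedGroup.toGroup hrel, fun j => ?_⟩
  have := PresentedGroup.toGroup.of (h := hrel) (x := j)
  rw [this]
end

section
/- With X₁, X₂ and ε₀ as in the context, define 𝔛ₖ = (X₁X₂)ᵏ + (X₂X₁)ᵏ for k ∈ ℕ. Then 𝔛₁ = ε₀·I₂, 𝔛₂ = (ε₀² − 2)·I₂, and for every n ≥ 3 one has the recurrence 𝔛ₙ = ε₀·𝔛_{n−1} − 𝔛_{n−2}. -/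
/-- The matrix `X = [[t, s], [(1−t²)/s, −t]]`. -/
noncomputable def Xmat (t s : ℂ) : Matrix (Fin 2) (Fin 2) ℂ :=
  !![t, s; (1 - t ^ 2) / s, -t]

/-- The scalar `ε₀ = 2t₁t₂ + s₁(1−t₂²)/s₂ + s₂(1−t₁²)/s₁`. -/
noncomputable def eps (t₁ s₁ t₂ s₂ : ℂ) : ℂ :=
  2 * t₁ * t₂ + s₁ * (1 - t₂ ^ 2) / s₂ + s₂ * (1 - t₁ ^ 2) / s₁

lemma Xmat_sq (t s : ℂ) (hs : s ≠ 0) : Xmat t s * Xmat t s = 1 := by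
  simp only [Xmat, Matrix.mul_fin_two]
  ext i j
  fin_cases i <;> fin_cases j <;> simp [Matrix.one_apply] <;> (try field_simp) <;> (try ring)

lemma Xmat_sum (t₁ s₁ t₂ s₂ : ℂ) (hs₁ : s₁ ≠ 0) (hs₂ : s₂ ≠ 0) :
    Xmat t₁ s₁ * Xmat t₂ s₂ + Xmat t₂ s₂ * Xmat t₁ s₁
      = eps t₁ s₁ t₂ s₂ • (1 : Matrix (Fin 2) (Fin 2) ℂ) := by
  simp only [Xmat, Matrix.mul_fin_two]
  ext i j
  fin_cases i <;> fin_cases j <;>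
    simp [eps, Matrix.one_apply] <;> (try field_simp) <;> (try ring)

theorem frakX_recurrence (t₁ s₁ t₂ s₂ : ℂ) (hs₁ : s₁ ≠ 0) (hs₂ : s₂ ≠ 0)
    (𝔛 : ℕ → Matrix (Fin 2) (Fin 2) ℂ)
    (h𝔛 : ∀ k, 𝔛 k = (Xmat t₁ s₁ * Xmat t₂ s₂) ^ k + (Xmat t₂ s₂ * Xmat t₁ s₁) ^ k) :
    𝔛 1 = eps t₁ s₁ t₂ s₂ • (1 : Matrix (Fin 2) (Fin 2) ℂ) ∧
    𝔛 2 = (eps t₁ s₁ t₂ s₂ ^ 2 - 2) • (1 : Matrix (Fin 2) (Fin 2) ℂ) ∧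
    ∀ n, 3 ≤ n → 𝔛 n = eps t₁ s₁ t₂ s₂ • 𝔛 (n - 1) - 𝔛 (n - 2) := by
  set A := Xmat t₁ s₁ * Xmat t₂ s₂ with hA
  set B := Xmat t₂ s₂ * Xmat t₁ s₁ with hB
  set e := eps t₁ s₁ t₂ s₂ with he
  have hAB : A * B = 1 := by
    rw [hA, hB, mul_assoc, ← mul_assoc (Xmat t₂ s₂), Xmat_sq t₂ s₂ hs₂, one_mul,
      Xmat_sq t₁ s₁ hs₁]
  have hBA : B * A = 1 := by
    rw [hA, hB, mul_assoc, ← mul_assoc (Xmat t₁ s₁), Xmat_sq t₁ s₁ hs₁, one_mul,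
      Xmat_sq t₂ s₂ hs₂]
  have hsum : A + B = e • (1 : Matrix (Fin 2) (Fin 2) ℂ) :=
    Xmat_sum t₁ s₁ t₂ s₂ hs₁ hs₂
  have hBe : B = e • (1 : Matrix (Fin 2) (Fin 2) ℂ) - A := by
    rw [← hsum]; abel
  have hA2 : A * A = e • A - 1 := by
    have h : (A + B) * A = (e • (1 : Matrix (Fin 2) (Fin 2) ℂ)) * A := by rw [hsum]
    rw [add_mul, hBA, Matrix.smul_mul, Matrix.one_mul] at h
    linear_combination (norm := abel) h
  have hB2 : B * B = e • B - 1 := by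
    have h : (A + B) * B = (e • (1 : Matrix (Fin 2) (Fin 2) ℂ)) * B := by rw [hsum]
    rw [add_mul, hAB, Matrix.smul_mul, Matrix.one_mul] at h
    linear_combination (norm := abel) h
  refine ⟨?_, ?_, ?_⟩
  · rw [h𝔛 1, pow_one, pow_one, hsum]
  · rw [h𝔛 2, pow_two, pow_two, hA2, hB2, hBe]
    module
  · intro n hn
    obtain ⟨m, rfl⟩ : ∃ m, n = m + 3 := ⟨n - 3, by omega⟩
    have h1 : m + 3 - 1 = m + 2 := by omega
    have h2 : m + 3 - 2 = m + 1 := by omega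
    rw [h1, h2, h𝔛, h𝔛, h𝔛]
    have pA : A ^ (m + 3) = e • A ^ (m + 2) - A ^ (m + 1) := by
      have h : A ^ (m + 3) = A ^ (m + 1) * (A * A) := by rw [pow_succ, pow_succ, mul_assoc]
      rw [h, hA2, mul_sub, mul_one, Matrix.mul_smul, ← pow_succ]
    have pB : B ^ (m + 3) = e • B ^ (m + 2) - B ^ (m + 1) := by
      have h : B ^ (m + 3) = B ^ (m + 1) * (B * B) := by rw [pow_succ, pow_succ, mul_assoc]
      rw [h, hB2, mul_sub, mul_one, Matrix.mul_smul, ← pow_succ]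
    rw [pA, pB]
    module
end

section
/- With X₁, X₂ and ε₀ as in the context, for every n ≥ 1 the matrix (X₁X₂)ⁿ is invertible with inverse ((X₁X₂)ⁿ)⁻¹ = fₙ(ε₀)·I₂ − (X₁X₂)ⁿ, and likewise ((X₂X₁)ⁿ)⁻¹ = fₙ(ε₀)·I₂ − (X₂X₁)ⁿ, where fₙ(z) = Σ_{k=0}^{⌊n/2⌋} (−1)ᵏ · (n/(n−k)) · C(n−k, k) · z^{n−2k}. -/
/-- The polynomial `fₙ(z) = Σ_{k=0}^{⌊n/2⌋} (−1)ᵏ (n/(n−k)) C(n−k, k) z^{n−2k}`. -/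
noncomputable def f (n : ℕ) (z : ℂ) : ℂ :=
  ∑ k ∈ Finset.range (n / 2 + 1),
    (-1 : ℂ) ^ k * ((n : ℂ) / ((n - k : ℕ) : ℂ)) * ((n - k).choose k : ℂ) * z ^ (n - 2 * k)

/-! ### Auxiliary combinatorial polynomials -/

/-- Fibonacci-type polynomial given by a binomial sum. -/
noncomputable def Apoly (n : ℕ) (z : ℂ) : ℂ :=
  ∑ k ∈ Finset.range (n + 1), (-1 : ℂ) ^ k * ((n - k).choose k : ℂ) * z ^ (n - 2 * k)

/-- Lucas-type polynomials defined by the three-term recurrence. -/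
noncomputable def Lp : ℕ → ℂ → ℂ
  | 0, _ => 2
  | 1, z => z
  | (n+2), z => z * Lp (n+1) z - Lp n z

lemma Apoly_term (n k : ℕ) (hk : k ≤ n) (z : ℂ) :
    (-1:ℂ)^(k+1) * ((n+2-(k+1)).choose (k+1) : ℂ) * z ^ (n+2-2*(k+1)) +
      (-1:ℂ)^k * ((n-k).choose k : ℂ) * z ^ (n-2*k) =
      z * ((-1:ℂ)^(k+1) * ((n+1-(k+1)).choose (k+1) : ℂ) * z ^ (n+1-2*(k+1))) := by
  have e1 : n + 2 - (k+1) = (n - k) + 1 := by omega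
  have e2 : n + 1 - (k+1) = n - k := by omega
  rw [e1, e2, Nat.choose_succ_succ]
  rcases lt_trichotomy (2*k) n with h | h | h
  · obtain ⟨m, hm⟩ : ∃ m, n + 1 - 2*(k+1) = m := ⟨_, rfl⟩
    have x1 : n + 2 - 2*(k+1) = m + 1 := by omega
    have x2 : n - 2*k = m + 1 := by omega
    rw [hm, x1, x2, pow_succ]
    push_cast
    ring
  · have hc : (n - k).choose (k+1) = 0 := Nat.choose_eq_zero_of_lt (by omega)
    have x1 : n + 2 - 2*(k+1) = 0 := by omega
    have x2 : n - 2*k = 0 := by omega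
    have x3 : n + 1 - 2*(k+1) = 0 := by omega
    rw [hc, x1, x2, x3]
    push_cast
    ring
  · have hc1 : (n - k).choose (k+1) = 0 := Nat.choose_eq_zero_of_lt (by omega)
    have hc2 : (n - k).choose k = 0 := Nat.choose_eq_zero_of_lt (by omega)
    rw [hc1, hc2]
    push_cast
    ring

lemma Apoly_rec (n : ℕ) (z : ℂ) :
    Apoly (n + 2) z = z * Apoly (n + 1) z - Apoly n z := by
  unfold Apoly
  rw [Finset.mul_sum]
  rw [Finset.sum_range_succ (n := n + 2) (f := fun k => (-1:ℂ)^k * ((n+2-k).choose k : ℂ) * z ^ (n+2-2*k))]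
  have h1 : ((n + 2 - (n + 2)).choose (n + 2) : ℂ) = 0 := by
    simp [Nat.choose_eq_zero_of_lt]
  rw [h1, mul_zero, zero_mul, add_zero]
  rw [Finset.sum_range_succ' (n := n + 1) (f := fun k => (-1:ℂ)^k * ((n+2-k).choose k : ℂ) * z ^ (n+2-2*k))]
  rw [Finset.sum_range_succ' (n := n + 1) (f := fun k => z * ((-1:ℂ)^k * ((n+1-k).choose k : ℂ) * z ^ (n+1-2*k)))]
  rw [eq_sub_iff_add_eq, add_right_comm, ← Finset.sum_add_distrib]
  congr 1
  · exact Finset.sum_congr rfl fun k hk =>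
      Apoly_term n k (Nat.lt_succ_iff.mp (Finset.mem_range.mp hk)) z
  · simp [pow_succ]
    ring

lemma coeff_eq (n k : ℕ) (hn : 1 ≤ n) (hk : k ≤ n / 2) :
    ((n : ℂ) / ((n - k : ℕ) : ℂ)) * ((n - k).choose k : ℂ) =
      ((n - k).choose k : ℂ) + (if k = 0 then 0 else (((n - k - 1).choose (k - 1) : ℕ) : ℂ)) := by
  have hkn : k < n := by omega
  have hnk : n - k ≠ 0 := by omega
  have hden : ((n - k : ℕ) : ℂ) ≠ 0 := Nat.cast_ne_zero.mpr hnk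
  have hcast : ((n - k : ℕ) : ℂ) = (n : ℂ) - (k : ℂ) := by
    exact_mod_cast Nat.cast_sub hkn.le
  rcases Nat.eq_zero_or_pos k with hk0 | hk0
  · subst hk0
    simp only [Nat.sub_zero] at hden ⊢
    rw [if_pos trivial, add_zero]
    rw [div_mul_eq_mul_div, mul_comm, mul_div_assoc, div_self hden, mul_one]
  · rw [if_neg (by omega)]
    have key : (n - k) * (n - k - 1).choose (k - 1) = (n - k).choose k * k := by
      have h := Nat.add_one_mul_choose_eq (n - k - 1) (k - 1)
      have e2 : n - k - 1 + 1 = n - k := by omega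
      have e4 : k - 1 + 1 = k := by omega
      simp -failIfUnchanged only [Nat.succ_eq_add_one] at h
      rw [e2, e4] at h
      exact h
    have keyC : ((n : ℂ) - (k : ℂ)) * ((n - k - 1).choose (k - 1) : ℂ)
        = ((n - k).choose k : ℂ) * (k : ℂ) := by
      rw [← hcast]; exact_mod_cast congrArg (Nat.cast : ℕ → ℂ) key
    rw [div_mul_eq_mul_div, div_eq_iff hden, hcast]
    linear_combination -keyC

lemma f_eq_sub (n : ℕ) (hn : 2 ≤ n) (z : ℂ) :
    f n z = Apoly n z - Apoly (n - 2) z := by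
  have hsplit : f n z =
      (∑ k ∈ Finset.range (n / 2 + 1), (-1:ℂ)^k * ((n - k).choose k : ℂ) * z ^ (n - 2*k)) +
      (∑ k ∈ Finset.range (n / 2 + 1),
        (-1:ℂ)^k * (if k = 0 then 0 else (((n - k - 1).choose (k - 1) : ℕ) : ℂ)) * z ^ (n - 2*k)) := by
    rw [← Finset.sum_add_distrib]
    refine Finset.sum_congr rfl fun k hk => ?_
    have hk' : k ≤ n / 2 := Nat.lt_succ_iff.mp (Finset.mem_range.mp hk)
    rw [mul_assoc ((-1:ℂ)^k), coeff_eq n k (by omega) hk']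
    ring
  rw [hsplit]
  have h1 : (∑ k ∈ Finset.range (n / 2 + 1), (-1:ℂ)^k * ((n - k).choose k : ℂ) * z ^ (n - 2*k))
      = Apoly n z := by
    unfold Apoly
    refine Finset.sum_subset ?_ fun k hk hk' => ?_
    · exact Finset.range_subset_range.mpr (by omega)
    simp only [Finset.mem_range] at hk hk'
    have : (n - k).choose k = 0 := Nat.choose_eq_zero_of_lt (by omega)
    simp [this]
  have h2 : (∑ k ∈ Finset.range (n / 2 + 1),
      (-1:ℂ)^k * (if k = 0 then 0 else (((n - k - 1).choose (k - 1) : ℕ) : ℂ)) * z ^ (n - 2*k))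
      = - Apoly (n - 2) z := by
    have hstep : ∀ j, (-1:ℂ)^(j+1) * (if j + 1 = 0 then 0 else (((n - (j+1) - 1).choose (j+1-1) : ℕ) : ℂ)) * z ^ (n - 2*(j+1))
        = - ((-1:ℂ)^j * (((n - 2 - j).choose j : ℕ) : ℂ) * z ^ (n - 2 - 2*j)) := by
      intro j
      have e1 : n - (j+1) - 1 = n - 2 - j := by omega
      have e2 : j + 1 - 1 = j := rfl
      have e3 : n - 2*(j+1) = n - 2 - 2*j := by omega
      rw [if_neg (by omega), e1, e2, e3, pow_succ]
      ring
    have hsub : ∑ j ∈ Finset.range (n/2), ((-1:ℂ)^j * (((n - 2 - j).choose j : ℕ) : ℂ) * z ^ (n - 2 - 2*j))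
        = ∑ j ∈ Finset.range ((n-2) + 1), ((-1:ℂ)^j * (((n - 2 - j).choose j : ℕ) : ℂ) * z ^ (n - 2 - 2*j)) := by
      apply Finset.sum_subset (Finset.range_subset_range.mpr (by omega))
      intro j hj hj'
      simp only [Finset.mem_range] at hj hj'
      have hz : (n - 2 - j).choose j = 0 := Nat.choose_eq_zero_of_lt (by omega)
      simp [hz]
    rw [Finset.sum_range_succ']
    rw [Finset.sum_congr rfl fun j _ => hstep j, Finset.sum_neg_distrib, hsub]
    simp [Apoly]
  rw [h1, h2]
  ring

lemma Lp_eq_sub (n : ℕ) (z : ℂ) :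
    Lp (n + 2) z = Apoly (n + 2) z - Apoly n z := by
  induction n using Nat.twoStepInduction with
  | zero =>
    show z * z - 2 = Apoly 2 z - Apoly 0 z
    simp [Apoly, Finset.sum_range_succ]
    ring
  | one =>
    show z * (z * z - 2) - z = Apoly 3 z - Apoly 1 z
    simp [Apoly, Finset.sum_range_succ]
    ring
  | more n ih1 ih2 =>
    show z * Lp (n + 3) z - Lp (n + 2) z = _
    rw [ih1, ih2, Apoly_rec (n + 2) z, Apoly_rec n z]
    ring

lemma f_eq_Lp (n : ℕ) (hn : 1 ≤ n) (z : ℂ) : f n z = Lp n z := by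
  rcases n with _ | _ | m
  · omega
  · show f 1 z = z
    simp [f]
  · rw [f_eq_sub (m + 2) (by omega) z, Lp_eq_sub m z]
    rfl

/-! ### Matrix lemmas -/

lemma adj2 (M : Matrix (Fin 2) (Fin 2) ℂ) :
    M.adjugate = M.trace • (1 : Matrix (Fin 2) (Fin 2) ℂ) - M := by
  rw [Matrix.adjugate_fin_two M]
  ext i j
  fin_cases i <;> fin_cases j <;>
    simp [Matrix.trace_fin_two, Matrix.one_apply]

lemma cayley2 (M : Matrix (Fin 2) (Fin 2) ℂ) (h : M.det = 1) :
    M * M = M.trace • M - 1 := by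
  have h1 : M * M.adjugate = M.det • (1 : Matrix (Fin 2) (Fin 2) ℂ) :=
    Matrix.mul_adjugate M
  rw [adj2, h, one_smul, mul_sub, mul_smul_comm, mul_one] at h1
  rw [show M * M = M.trace • M - (M.trace • M - M * M) from by abel, h1]

lemma trace_pow_eq (M : Matrix (Fin 2) (Fin 2) ℂ) (h : M.det = 1) :
    ∀ n, (M ^ n).trace = Lp n M.trace := by
  intro n
  induction n using Nat.twoStepInduction with
  | zero => simp [Lp, Matrix.trace_one]
  | one => simp [Lp]
  | more n ih1 ih2 =>
    have e : M ^ (n + 2) = M ^ n * (M * M) := by rw [pow_add, pow_two]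
    rw [e, cayley2 M h, mul_sub, mul_one, Matrix.mul_smul, Matrix.trace_sub,
      Matrix.trace_smul, ← pow_succ]
    rw [Lp, ih1, ih2]
    simp only [smul_eq_mul]

lemma key_lemma (M : Matrix (Fin 2) (Fin 2) ℂ) (hdet : M.det = 1) (n : ℕ) (hn : 1 ≤ n) :
    IsUnit (M ^ n) ∧
      (M ^ n)⁻¹ = f n M.trace • (1 : Matrix (Fin 2) (Fin 2) ℂ) - M ^ n := by
  have hdn : (M ^ n).det = 1 := by rw [Matrix.det_pow, hdet, one_pow]
  constructor
  · exact (Matrix.isUnit_iff_isUnit_det _).mpr (by rw [hdn]; exact isUnit_one)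
  · rw [Matrix.inv_def, hdn, Ring.inverse_one, one_smul, adj2,
      trace_pow_eq M hdet n, f_eq_Lp n hn]

lemma det_Xmat (t s : ℂ) (hs : s ≠ 0) : (Xmat t s).det = -1 := by
  rw [Xmat, Matrix.det_fin_two_of]
  field_simp
  ring

lemma trace_XX (t₁ s₁ t₂ s₂ : ℂ) (hs₁ : s₁ ≠ 0) (hs₂ : s₂ ≠ 0) :
    (Xmat t₁ s₁ * Xmat t₂ s₂).trace = eps t₁ s₁ t₂ s₂ := by
  rw [Xmat, Xmat, Matrix.mul_fin_two, Matrix.trace_fin_two_of, eps]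
  field_simp
  ring

theorem pow_inv_eq_f_smul_one_sub (t₁ s₁ t₂ s₂ : ℂ) (hs₁ : s₁ ≠ 0) (hs₂ : s₂ ≠ 0) :
    ∀ n : ℕ, 1 ≤ n →
      IsUnit ((Xmat t₁ s₁ * Xmat t₂ s₂) ^ n) ∧
      ((Xmat t₁ s₁ * Xmat t₂ s₂) ^ n)⁻¹ =
        f n (eps t₁ s₁ t₂ s₂) • (1 : Matrix (Fin 2) (Fin 2) ℂ) -
          (Xmat t₁ s₁ * Xmat t₂ s₂) ^ n ∧
      IsUnit ((Xmat t₂ s₂ * Xmat t₁ s₁) ^ n) ∧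
      ((Xmat t₂ s₂ * Xmat t₁ s₁) ^ n)⁻¹ =
        f n (eps t₁ s₁ t₂ s₂) • (1 : Matrix (Fin 2) (Fin 2) ℂ) -
          (Xmat t₂ s₂ * Xmat t₁ s₁) ^ n := by
  intro n hn
  have hdet12 : (Xmat t₁ s₁ * Xmat t₂ s₂).det = 1 := by
    rw [Matrix.det_mul, det_Xmat t₁ s₁ hs₁, det_Xmat t₂ s₂ hs₂]; ring
  have hdet21 : (Xmat t₂ s₂ * Xmat t₁ s₁).det = 1 := by
    rw [Matrix.det_mul, det_Xmat t₂ s₂ hs₂, det_Xmat t₁ s₁ hs₁]; ring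
  have htr12 : (Xmat t₁ s₁ * Xmat t₂ s₂).trace = eps t₁ s₁ t₂ s₂ :=
    trace_XX t₁ s₁ t₂ s₂ hs₁ hs₂
  have htr21 : (Xmat t₂ s₂ * Xmat t₁ s₁).trace = eps t₁ s₁ t₂ s₂ := by
    rw [Matrix.trace_mul_comm, htr12]
  obtain ⟨u12, i12⟩ := key_lemma _ hdet12 n hn
  obtain ⟨u21, i21⟩ := key_lemma _ hdet21 n hn
  rw [htr12] at i12
  rw [htr21] at i21
  exact ⟨u12, i12, u21, i21⟩
end

section
/- With X₁, X₂ and ε₀ as in the context, let T = X₁ + X₂ and let tr denote the trace of a 2×2 complex matrix. Then for every n ∈ ℕ one has tr(T^{2n}) = 2(ε₀ + 2)ⁿ and tr(T^{2n+1}) = 0; that is, tr(Tᵐ) = 2(ε₀+2)^{m/2} when m is even and tr(Tᵐ) = 0 when m is odd. -/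
theorem trace_radial_pow (t₁ s₁ t₂ s₂ : ℂ) (hs₁ : s₁ ≠ 0) (hs₂ : s₂ ≠ 0)
    (T : Matrix (Fin 2) (Fin 2) ℂ) (hT : T = Xmat t₁ s₁ + Xmat t₂ s₂) :
    ∀ n : ℕ,
      (T ^ (2 * n)).trace = 2 * (eps t₁ s₁ t₂ s₂ + 2) ^ n ∧
      (T ^ (2 * n + 1)).trace = 0 := by
  have hT2 : T ^ 2 = (eps t₁ s₁ t₂ s₂ + 2) • (1 : Matrix (Fin 2) (Fin 2) ℂ) := by
    subst hT
    ext i j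
    fin_cases i <;> fin_cases j <;>
      simp only [eps, Xmat, pow_two, Matrix.add_mul, Matrix.mul_add, Matrix.add_apply,
        Matrix.mul_apply, Fin.sum_univ_two, Matrix.smul_apply, Matrix.one_apply,
        Matrix.cons_val', Matrix.cons_val_zero, Matrix.cons_val_one, Matrix.head_cons,
        Matrix.empty_val', Matrix.cons_val_fin_one, Matrix.head_fin_const, smul_eq_mul, Matrix.of_apply, Fin.zero_eta, Fin.mk_one, Fin.isValue,
          if_true, Fin.reduceEq, if_false] <;>
      field_simp <;> ring
  set c : ℂ := eps t₁ s₁ t₂ s₂ + 2 with hc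
  have htr : T.trace = 0 := by
    subst hT
    simp [Xmat, Matrix.trace_fin_two]
    ring
  intro n
  have h1 : T ^ (2 * n) = c ^ n • (1 : Matrix (Fin 2) (Fin 2) ℂ) := by
    rw [pow_mul, hT2, smul_pow, one_pow]
  constructor
  · rw [h1]
    simp [Matrix.trace_smul, Matrix.trace_one]
    ring
  · rw [pow_succ, h1]
    simp [Matrix.trace_smul, htr]
end

section
/- Define g : ℕ × ℕ → ℚ by g(n,k) = n·(n−k−1)! / ((n−2k)!·k!) if n ≥ 1 and 0 ≤ 2k ≤ n, and g(n,k) = 0 otherwise. Then g(1,0) = 1, and for all natural numbers n ≥ 2 and k ≥ 1 one has the Lucas-triangle recurrence g(n+1, k) = g(n, k) + g(n−1, k−1). -/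
/-- The Lucas-triangle entries `g(n,k) = n(n−k−1)!/((n−2k)!k!)` for `n ≥ 1`, `2k ≤ n`,
and `0` otherwise. -/
def lucasEntry : ℕ × ℕ → ℚ := fun p =>
  if 1 ≤ p.1 ∧ 2 * p.2 ≤ p.1 then
    (p.1 : ℚ) * (Nat.factorial (p.1 - p.2 - 1)) /
      ((Nat.factorial (p.1 - 2 * p.2)) * (Nat.factorial p.2))
  else 0

theorem lucasEntry_recurrence :
    lucasEntry (1, 0) = 1 ∧
    ∀ n k : ℕ, 2 ≤ n → 1 ≤ k →
      lucasEntry (n + 1, k) = lucasEntry (n, k) + lucasEntry (n - 1, k - 1) := by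
  constructor
  · simp [lucasEntry, Nat.factorial]
  · intro n k hn hk
    rcases lt_trichotomy (n + 1) (2 * k) with h | h | h
    · -- all three terms vanish
      rw [lucasEntry, lucasEntry, lucasEntry, if_neg (by omega), if_neg (by omega),
        if_neg (by push_neg; intro _; omega)]
      norm_num
    · -- 2k = n+1 : middle term vanishes
      obtain ⟨i, rfl, rfl⟩ : ∃ i, n = 2 * i + 3 ∧ k = i + 2 := ⟨k - 2, by omega, by omega⟩
      have e1 : 2 * i + 3 - 1 = 2 * i + 2 := by omega
      have e2 : i + 2 - 1 = i + 1 := by omega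
      rw [e1, e2, lucasEntry, lucasEntry, lucasEntry, if_pos (by constructor <;> omega),
        if_neg (by push_neg; intro _; omega), if_pos (by constructor <;> omega)]
      have s1 : 2 * i + 3 + 1 - (i + 2) - 1 = i + 1 := by omega
      have s2 : 2 * i + 3 + 1 - 2 * (i + 2) = 0 := by omega
      have s3 : 2 * i + 2 - (i + 1) - 1 = i := by omega
      have s4 : 2 * i + 2 - 2 * (i + 1) = 0 := by omega
      rw [s1, s2, s3, s4]
      have f1 : (Nat.factorial (i + 1) : ℚ) ≠ 0 := by
        exact_mod_cast (Nat.factorial_pos _).ne'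
      have f2 : (Nat.factorial (i + 2) : ℚ) ≠ 0 := by
        exact_mod_cast (Nat.factorial_pos _).ne'
      rw [Nat.factorial_succ (i + 1), Nat.factorial_succ i, Nat.factorial_zero]
      push_cast
      field_simp
      ring
    · -- 2k ≤ n : all three terms present
      obtain ⟨j, m, rfl, rfl⟩ : ∃ j m, k = j + 1 ∧ n = 2 * j + 2 + m :=
        ⟨k - 1, n - 2 * k, by omega, by omega⟩
      have e1 : 2 * j + 2 + m - 1 = 2 * j + 1 + m := by omega
      have e2 : j + 1 - 1 = j := by omega
      rw [e1, e2, lucasEntry, lucasEntry, lucasEntry, if_pos (by constructor <;> omega),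
        if_pos (by constructor <;> omega), if_pos (by constructor <;> omega)]
      have s1 : 2 * j + 2 + m + 1 - (j + 1) - 1 = j + m + 1 := by omega
      have s2 : 2 * j + 2 + m + 1 - 2 * (j + 1) = m + 1 := by omega
      have s3 : 2 * j + 2 + m - (j + 1) - 1 = j + m := by omega
      have s4 : 2 * j + 2 + m - 2 * (j + 1) = m := by omega
      have s5 : 2 * j + 1 + m - j - 1 = j + m := by omega
      have s6 : 2 * j + 1 + m - 2 * j = m + 1 := by omega
      rw [s1, s2, s3, s4, s5, s6]
      have f1 : (Nat.factorial (j + m) : ℚ) ≠ 0 := by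
        exact_mod_cast (Nat.factorial_pos _).ne'
      have f2 : (Nat.factorial m : ℚ) ≠ 0 := by
        exact_mod_cast (Nat.factorial_pos _).ne'
      have f3 : (Nat.factorial j : ℚ) ≠ 0 := by
        exact_mod_cast (Nat.factorial_pos _).ne'
      rw [Nat.factorial_succ (j + m), Nat.factorial_succ m, Nat.factorial_succ j]
      push_cast
      field_simp
      ring
end
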